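/- For any stable matching instance with equal numbers of men and women and strict complete preference lists, the men-proposing Deferred Acceptance algorithm terminates and outputs a matching with no blocking pair, i.e., a stable matching always exists. -/
import Mathlib


open Finset

/-- A stable matching instance: `n` men and `n` women; `mrank m w` is the
(0-indexed) rank of woman `w` in man `m`'s strict preference list (lower = more
preferred); `wrank w m` analogously. -/
structure SMInstance (n : ℕ) where
  mrank : Fin n → Fin n → Fin n
  wrank : Fin n → Fin n → Fin n
  mbij : ∀ m, Function.Bijective (mrank m)
  wbij : ∀ w, Function.Bijective (wrank w)

namespace SMInstance

variable {n : ℕ}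

/-- `(m, w)` is a blocking pair of the perfect matching `μ`. -/
def Blocking (I : SMInstance n) (μ : Equiv.Perm (Fin n)) (m w : Fin n) : Prop :=
  μ m ≠ w ∧ I.mrank m w < I.mrank m (μ m) ∧ I.wrank w m < I.wrank w (μ.symm w)

/-- A matching is stable if it admits no blocking pair. -/
def Stable (I : SMInstance n) (μ : Equiv.Perm (Fin n)) : Prop :=
  ∀ m w, ¬ I.Blocking μ m w

/-- Total (1-indexed) rank of partners over men. -/
def SM (I : SMInstance n) (μ : Equiv.Perm (Fin n)) : ℤ :=
  ∑ m : Fin n, (((I.mrank m (μ m) : ℕ) : ℤ) + 1)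

/-- Total (1-indexed) rank of partners over women. -/
def SW (I : SMInstance n) (μ : Equiv.Perm (Fin n)) : ℤ :=
  ∑ w : Fin n, (((I.wrank w (μ.symm w) : ℕ) : ℤ) + 1)

/-- The sex-equality cost of a matching. -/
def cost (I : SMInstance n) (μ : Equiv.Perm (Fin n)) : ℤ :=
  |I.SM μ - I.SW μ|

end SMInstance

namespace SMInstance

variable {n : ℕ} (I : SMInstance n)

/-- Man `m`'s preference ranking as a permutation. -/
noncomputable def mperm (m : Fin n) : Equiv.Perm (Fin n) :=
  Equiv.ofBijective _ (I.mbij m)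

/-- In the state `r`, man `m` proposes to his `r m`-th choice. -/
noncomputable def curW (r : Fin n → Fin n) (m : Fin n) : Fin n :=
  (I.mperm m).symm (r m)

lemma mrank_curW (r : Fin n → Fin n) (m : Fin n) :
    I.mrank m (I.curW r m) = r m := by
  exact (I.mperm m).apply_symm_apply (r m)

/-- Man `m` is rejected in state `r`: some other man proposing to the same
woman is preferred by her. -/
def Rejected (r : Fin n → Fin n) (m : Fin n) : Prop :=
  ∃ m', I.curW r m' = I.curW r m ∧
    I.wrank (I.curW r m) m' < I.wrank (I.curW r m) m

/-- The key invariant: if woman `w` has (4ever) rejected man `m`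
(i.e. `m` has moved past `w` in his list), then `w` currently has a proposer
she prefers to `m`. -/
def Inv (r : Fin n → Fin n) : Prop :=
  ∀ w m, (I.mrank m w : ℕ) < (r m : ℕ) →
    ∃ m', I.curW r m' = w ∧ I.wrank w m' < I.wrank w m

/-- Among the proposers of a woman there is a best one. -/
lemma exists_best (r : Fin n → Fin n) (w m0 : Fin n) (h : I.curW r m0 = w) :
    ∃ b, I.curW r b = w ∧ ∀ m', I.curW r m' = w → I.wrank w b ≤ I.wrank w m' := by
  classical
  obtain ⟨b, hb, hmin⟩ := Finset.exists_min_image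
    (univ.filter fun m => I.curW r m = w) (fun m => I.wrank w m)
    ⟨m0, by simp [h]⟩
  refine ⟨b, by simpa using hb, fun m' hm' => hmin m' (by simp [hm'])⟩

/-- A best proposer is not rejected. -/
lemma best_not_rejected (r : Fin n → Fin n) (w b : Fin n)
    (hb : I.curW r b = w) (hmin : ∀ m', I.curW r m' = w → I.wrank w b ≤ I.wrank w m') :
    ¬ I.Rejected r b := by
  rintro ⟨m', hm1, hm2⟩
  rw [hb] at hm1 hm2
  exact absurd (hmin m' hm1) (not_le.mpr hm2)

/-- Counting lemma: a rejected man has not reached the end of his list. -/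
lemma rejected_lt (r : Fin n → Fin n) (hInv : I.Inv r) (m : Fin n)
    (h : I.Rejected r m) : (r m : ℕ) + 1 < n := by
  by_contra hcon
  have hrm : (r m : ℕ) + 1 = n := by have := (r m).isLt; omega
  have hall : ∀ w : Fin n, ∃ p, I.curW r p = w ∧ I.wrank w p < I.wrank w m := by
    intro w
    by_cases hw : w = I.curW r m
    · obtain ⟨m', hm1, hm2⟩ := h
      exact ⟨m', hw ▸ hm1, hw ▸ hm2⟩
    · apply hInv
      have h1 : (I.mrank m w : ℕ) < n := (I.mrank m w).isLt
      have h2 : I.mrank m w ≠ r m := by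
        intro he
        apply hw
        have hrw : I.mrank m w = I.mrank m (I.curW r m) := by
          rw [he, I.mrank_curW]
        exact ((I.mbij m).injective hrw)
      have h3 : (I.mrank m w : ℕ) ≠ (r m : ℕ) := fun hh => h2 (Fin.ext hh)
      omega
  choose f hf1 hf2 using hall
  have hinj : Function.Injective f := fun a b hab => by
    rw [← hf1 a, ← hf1 b, hab]
  obtain ⟨w, hw⟩ := Finite.injective_iff_surjective.mp hinj m
  have := hf2 w
  rw [hw] at this
  exact lt_irrefl _ this

/-- The invariant is preserved by one round of rejections. -/
lemma inv_step (r : Fin n → Fin n) (hInv : I.Inv r) (r' : Fin n → Fin n)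
    (hstep : ∀ m, (¬ I.Rejected r m → r' m = r m) ∧
      (I.Rejected r m → (r' m : ℕ) = (r m : ℕ) + 1)) :
    I.Inv r' := by
  have key : ∀ w m, (∃ m'', I.curW r m'' = w ∧ I.wrank w m'' < I.wrank w m) →
      ∃ b, I.curW r' b = w ∧ I.wrank w b < I.wrank w m := by
    rintro w m ⟨m'', hm1, hm2⟩
    obtain ⟨b, hb1, hb2⟩ := I.exists_best r w m'' hm1
    have hnrej : ¬ I.Rejected r b := I.best_not_rejected r w b hb1 hb2
    have hrb : r' b = r b := (hstep b).1 hnrej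
    refine ⟨b, ?_, lt_of_le_of_lt (hb2 m'' hm1) hm2⟩
    rw [curW, hrb, ← curW, hb1]
  intro w m hlt
  by_cases hrej : I.Rejected r m
  · have hr'm : (r' m : ℕ) = (r m : ℕ) + 1 := (hstep m).2 hrej
    rw [hr'm] at hlt
    rcases lt_or_eq_of_le (Nat.lt_succ_iff.mp hlt) with hlt' | heq
    · exact key w m (hInv w m hlt')
    · have hwm : w = I.curW r m := by
        apply (I.mbij m).injective
        rw [I.mrank_curW]
        exact Fin.ext heq
      obtain ⟨m', hm1, hm2⟩ := hrej
      exact key w m ⟨m', hwm ▸ hm1, hwm ▸ hm2⟩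
  · have hr'm : r' m = r m := (hstep m).1 hrej
    rw [hr'm] at hlt
    exact key w m (hInv w m hlt)

/-- A terminal state (no rejections) yields a stable matching. -/
lemma terminal_stable (r : Fin n → Fin n) (hInv : I.Inv r)
    (hterm : ∀ m, ¬ I.Rejected r m) : ∃ μ : Equiv.Perm (Fin n), I.Stable μ := by
  have hinj : Function.Injective (I.curW r) := by
    intro a b hab
    by_contra hne
    rcases lt_trichotomy (I.wrank (I.curW r a) a) (I.wrank (I.curW r a) b) with h | h | h
    · exact hterm b ⟨a, hab, by rw [← hab]; exact h⟩
    · exact hne ((I.wbij (I.curW r a)).injective h)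
    · exact hterm a ⟨b, hab.symm, h⟩
  have hbij : Function.Bijective (I.curW r) := Finite.injective_iff_bijective.mp hinj
  refine ⟨Equiv.ofBijective _ hbij, ?_⟩
  rintro m w ⟨h1, h2, h3⟩
  have hμm : Equiv.ofBijective _ hbij m = I.curW r m := rfl
  rw [hμm, I.mrank_curW] at h2
  have h2' : (I.mrank m w : ℕ) < (r m : ℕ) := h2
  obtain ⟨m', hm1, hm2⟩ := hInv w m h2'
  have hμm' : (Equiv.ofBijective _ hbij) m' = w := hm1
  have hsymm : m' = (Equiv.ofBijective _ hbij).symm w := by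
    rw [← hμm', Equiv.symm_apply_apply]
  rw [hsymm] at hm2
  exact absurd h3 (not_lt.mpr hm2.le)

end SMInstance

/-- for any instance with equal numbers of men and women and strict
complete preferences, the men-proposing Deferred Acceptance algorithm terminates
with a matching having no blocking pair; i.e., a stable matching always exists. -/
theorem stable_matching_exists {n : ℕ} (I : SMInstance n) :
    ∃ μ : Equiv.Perm (Fin n), I.Stable μ := by
  classical
  obtain hn | hn := Nat.eq_zero_or_pos n
  · subst hn
    exact ⟨1, fun m w => m.elim0⟩
  have key : ∀ k (r : Fin n → Fin n), I.Inv r →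
      (∑ m, (n - 1 - (r m : ℕ))) ≤ k → ∃ μ : Equiv.Perm (Fin n), I.Stable μ := by
    intro k
    induction k with
    | zero =>
      intro r hInv hsum
      by_cases hterm : ∀ m, ¬ I.Rejected r m
      · exact I.terminal_stable r hInv hterm
      · push_neg at hterm
        obtain ⟨m0, hm0⟩ := hterm
        have h1 := I.rejected_lt r hInv m0 hm0
        have h2 : (n - 1 - (r m0 : ℕ)) ≤ ∑ m, (n - 1 - (r m : ℕ)) :=
          Finset.single_le_sum (f := fun m => n - 1 - (r m : ℕ)) (fun _ _ => Nat.zero_le _) (Finset.mem_univ m0)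
        omega
    | succ k ih =>
      intro r hInv hsum
      by_cases hterm : ∀ m, ¬ I.Rejected r m
      · exact I.terminal_stable r hInv hterm
      · push_neg at hterm
        obtain ⟨m0, hm0⟩ := hterm
        set r' : Fin n → Fin n :=
          fun m => if h : I.Rejected r m then ⟨(r m : ℕ) + 1, I.rejected_lt r hInv m h⟩
            else r m with hr'def
        have hprop : ∀ m, (¬ I.Rejected r m → r' m = r m) ∧
            (I.Rejected r m → (r' m : ℕ) = (r m : ℕ) + 1) := by
          intro m
          constructor <;> intro h <;> simp [hr'def, h]
        apply ih r' (I.inv_step r hInv r' hprop)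
        have hlt : ∑ m, (n - 1 - (r' m : ℕ)) < ∑ m, (n - 1 - (r m : ℕ)) := by
          apply Finset.sum_lt_sum
          · intro m _
            by_cases h : I.Rejected r m
            · have := (hprop m).2 h; omega
            · have := (hprop m).1 h; rw [this]
          · refine ⟨m0, Finset.mem_univ m0, ?_⟩
            have h1 := (hprop m0).2 hm0
            have h2 := I.rejected_lt r hInv m0 hm0
            omega
        omega
  apply key (∑ _m : Fin n, (n - 1)) (fun _ => ⟨0, hn⟩)
  · intro w m h
    simp at h
  · exact Finset.sum_le_sum (fun m _ => by simp)
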